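/- If H is obtained from a graph G by deleting an edge, then stcw(H) ≤ stcw(G). -/

import Mathlib

open scoped Classical

noncomputable section

namespace PaperSTCW

open SimpleGraph Finset

/-- Degree of a vertex in a multiset of edges over `Sym2 W`, loops counting twice. -/
def mdeg {W : Type} (E : Multiset (Sym2 W)) (v : W) : ℕ :=
  (E.map fun e => if e = Sym2.diag v then 2 else if v ∈ e then 1 else 0).sum

/-- Remove the edges incident to `v` and, if `lift = true` and `v` was incident to exactly
two non-loop edges, add the lifted edge between their other endpoints
(this is the edge replacement performed when suppressing a degree-2 vertex). -/
def nextE {W : Type} (lift : Bool) (v : W) (E : Multiset (Sym2 W)) : Multiset (Sym2 W) :=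
  E.filter (fun e => v ∉ e) +
    (if lift then
      (match (E.filter (fun e => v ∈ e)).toList.map
          (fun e => if hm : v ∈ e then Sym2.Mem.other hm else v) with
        | [a, b] => ({s(a, b)} : Multiset (Sym2 W))
        | _ => 0)
     else 0)

/-- Exhaustively delete (and, when `lift = true`, suppress) vertices outside `X` of degree
at most `d` from the multigraph with vertex set `S` and edge multiset `E`;
returns the surviving vertex set. -/
def reduce {W : Type} (X : Finset W) (d : ℕ) (lift : Bool)
    (S : Finset W) (E : Multiset (Sym2 W)) : Finset W :=
  if h : ∃ v, v ∈ S ∧ v ∉ X ∧ mdeg E v ≤ d then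
    reduce X d lift (S.erase h.choose) (nextE lift h.choose E)
  else S
termination_by S.card
decreasing_by exact Finset.card_erase_lt_of_mem h.choose_spec.1

/-- A tree-cut decomposition of `G`: a rooted tree together with a near-partition of the
vertices of `G` into bags (each vertex lies in exactly one bag; bags may be empty). -/
structure TCD {V : Type} [Fintype V] (G : SimpleGraph V) where
  n : ℕ
  T : SimpleGraph (Fin n)
  tree : T.IsTree
  root : Fin n
  bag : Fin n → Finset V
  partition : ∀ v : V, ∃! t, v ∈ bag t

variable {V : Type} [Fintype V] {G : SimpleGraph V}

/-- The set of nodes in the subtree rooted at `t` (those nodes all of whose walks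
from the root pass through `t`). -/
def TCD.desc (D : TCD G) (t : Fin D.n) : Set (Fin D.n) :=
  {s | ∀ p : D.T.Walk D.root s, t ∈ p.support}

/-- The union of the bags of the subtree rooted at `t`. -/
def TCD.Y (D : TCD G) (t : Fin D.n) : Finset V :=
  Finset.univ.filter fun v => ∃ s, s ∈ D.desc t ∧ v ∈ D.bag s

/-- Adhesion of a node: the number of edges of `G` with exactly one endpoint in `Y t`. -/
def TCD.adh (D : TCD G) (t : Fin D.n) : ℕ :=
  ((Finset.univ : Finset (Sym2 V)).filter fun e =>
    e ∈ G.edgeSet ∧ ∃ a b, e = s(a, b) ∧ a ∈ D.Y t ∧ b ∉ D.Y t).card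

/-- The connected components of `T - t`. -/
def TCD.Cmp (D : TCD G) (t : Fin D.n) : Type :=
  (SimpleGraph.induce {s | s ≠ t} D.T).ConnectedComponent

instance (D : TCD G) (t : Fin D.n) : Fintype (D.Cmp t) := by
  unfold TCD.Cmp; infer_instance

/-- The consolidation map of the torso at `t`: vertices of the bag of `t` are kept,
all vertices in the bags of a fixed connected component of `T - t` are consolidated
into a single vertex. -/
def TCD.toTorso (D : TCD G) (t : Fin D.n) (v : V) : V ⊕ D.Cmp t :=
  if h : ∃ s, s ≠ t ∧ v ∈ D.bag s then
    Sum.inr ((SimpleGraph.induce {s | s ≠ t} D.T).connectedComponentMk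
      ⟨h.choose, h.choose_spec.1⟩)
  else Sum.inl v

/-- Vertex set of the torso at `t`. -/
def TCD.torsoS (D : TCD G) (t : Fin D.n) : Finset (V ⊕ D.Cmp t) :=
  ((D.bag t).image Sum.inl) ∪ (Finset.univ.image Sum.inr)

/-- Edge multiset of the torso at `t` (consolidation keeps multiplicities and drops loops). -/
def TCD.torsoE (D : TCD G) (t : Fin D.n) : Multiset (Sym2 (V ⊕ D.Cmp t)) :=
  (((Finset.univ : Finset (Sym2 V)).filter fun e => e ∈ G.edgeSet).val.map
      (Sym2.map (D.toTorso t))).filter fun e => ¬ e.IsDiag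

/-- Torso-size: the order of the 3-center of the torso at `t`, obtained by exhaustively
suppressing vertices outside the bag of degree at most 2. -/
def TCD.tor (D : TCD G) (t : Fin D.n) : ℕ :=
  (reduce ((D.bag t).image Sum.inl) 2 true (D.torsoS t) (D.torsoE t)).card

/-- The order of the 2-center of the torso at `t`, obtained by exhaustively deleting
vertices outside the bag of degree at most 1. -/
def TCD.tor2 (D : TCD G) (t : Fin D.n) : ℕ :=
  (reduce ((D.bag t).image Sum.inl) 1 false (D.torsoS t) (D.torsoE t)).card

/-- The order of the 1-center of the torso at `t`, obtained by deleting isolated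
vertices outside the bag. -/
def TCD.tor1 (D : TCD G) (t : Fin D.n) : ℕ :=
  (reduce ((D.bag t).image Sum.inl) 0 false (D.torsoS t) (D.torsoE t)).card

/-- Width of a tree-cut decomposition. -/
def TCD.width (D : TCD G) : ℕ := Finset.univ.sup fun t => max (D.adh t) (D.tor t)

/-- Slim width of a tree-cut decomposition. -/
def TCD.slimWidth (D : TCD G) : ℕ := Finset.univ.sup fun t => max (D.adh t) (D.tor2 t)

/-- 0-width of a tree-cut decomposition. -/
def TCD.zeroWidth (D : TCD G) : ℕ := Finset.univ.sup fun t => max (D.adh t) (D.tor1 t)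

/-- Tree-cut width. -/
def tcw {V : Type} [Fintype V] (G : SimpleGraph V) : ℕ :=
  sInf {k | ∃ D : TCD G, D.width ≤ k}

/-- Slim tree-cut width. -/
def stcw {V : Type} [Fintype V] (G : SimpleGraph V) : ℕ :=
  sInf {k | ∃ D : TCD G, D.slimWidth ≤ k}

/-- 0-tree-cut width. -/
def tcw0 {V : Type} [Fintype V] (G : SimpleGraph V) : ℕ :=
  sInf {k | ∃ D : TCD G, D.zeroWidth ≤ k}


/-! ### Bundled finite graphs and weak immersions -/

structure FG where
  V : Type
  [fin : Fintype V]
  G : SimpleGraph V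

attribute [instance] FG.fin

/-- One step of obtaining a graph from another: an isomorphic copy, deleting an edge,
deleting a vertex, or lifting a pair of incident edges `(x,y), (y,z)` (deleting them
and adding the edge `(x,z)`). `ImmStep B A` means `B` is obtained from `A`. -/
inductive ImmStep : FG → FG → Prop
  | iso (A B : FG) : (Nonempty (B.G ≃g A.G)) → ImmStep B A
  | delEdge (A : FG) (e : Sym2 A.V) (he : e ∈ A.G.edgeSet) :
      ImmStep (FG.mk A.V (A.G.deleteEdges {e})) A
  | delVertex (A : FG) (v : A.V) :
      ImmStep (FG.mk {w : A.V // w ≠ v} (SimpleGraph.induce {w : A.V | w ≠ v} A.G)) A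
  | lift (A : FG) (x y z : A.V) (hxy : A.G.Adj x y) (hyz : A.G.Adj y z) (hxz : x ≠ z) :
      ImmStep (FG.mk A.V (SimpleGraph.fromEdgeSet
        ((A.G.edgeSet \ {s(x, y), s(y, z)}) ∪ {s(x, z)}))) A

/-- `Immersion H G` : `G` contains `H` as a weak immersion, i.e. `H` can be obtained from
`G` by a sequence of edge deletions, vertex deletions and liftings. -/
def Immersion (H G : FG) : Prop := Relation.ReflTransGen ImmStep H G

/-- `H` consists of `m` cycles intersecting in one vertex and otherwise pairwise
vertex-disjoint. -/
def IsFlower (m : ℕ) {W : Type} [Fintype W] (H : SimpleGraph W) : Prop :=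
  H.Connected ∧ ∃ c : W, H.degree c = 2 * m ∧ ∀ v : W, v ≠ c → H.degree v = 2

/-- `H` consists of `m` paths with the same two endpoints which are otherwise pairwise
vertex-disjoint. -/
def IsTheta (m : ℕ) {W : Type} [Fintype W] (H : SimpleGraph W) : Prop :=
  H.Connected ∧ ∃ x y : W, x ≠ y ∧ H.degree x = m ∧ H.degree y = m ∧
    (∀ v : W, v ≠ x → v ≠ y → H.degree v = 2) ∧
    (SimpleGraph.induce {v : W | v ≠ x} H).IsAcyclic ∧
    (SimpleGraph.induce {v : W | v ≠ y} H).IsAcyclic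

/-- The star `K_{1,r}`. -/
def star (r : ℕ) : SimpleGraph (Fin 1 ⊕ Fin r) := completeBipartiteGraph (Fin 1) (Fin r)

/-- The windmill `W_r`: `r` triangles sharing one vertex, otherwise vertex-disjoint. -/
def windmill (r : ℕ) : SimpleGraph (Option (Fin r × Fin 2)) :=
  SimpleGraph.fromRel (fun x y =>
    x = none ∨ ∃ (i : Fin r) (a b : Fin 2), x = some (i, a) ∧ y = some (i, b))

/-- `G` is the `k`-edge sum `G₁ ⊕ₖ G₂` at vertices `v₁, v₂` of degree `k`. -/
def IsEdgeSum {V₁ V₂ : Type} [Fintype V₁] [Fintype V₂] (k : ℕ)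
    (G₁ : SimpleGraph V₁) (G₂ : SimpleGraph V₂) (v₁ : V₁) (v₂ : V₂)
    (G : SimpleGraph ({x : V₁ // x ≠ v₁} ⊕ {y : V₂ // y ≠ v₂})) : Prop :=
  G₁.degree v₁ = k ∧ G₂.degree v₂ = k ∧
  ∃ π : V₁ → V₂, Set.BijOn π (G₁.neighborSet v₁) (G₂.neighborSet v₂) ∧
    (∀ a b : {x : V₁ // x ≠ v₁}, G.Adj (Sum.inl a) (Sum.inl b) ↔ G₁.Adj a b) ∧
    (∀ a b : {y : V₂ // y ≠ v₂}, G.Adj (Sum.inr a) (Sum.inr b) ↔ G₂.Adj a b) ∧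
    (∀ (a : {x : V₁ // x ≠ v₁}) (b : {y : V₂ // y ≠ v₂}),
      G.Adj (Sum.inl a) (Sum.inr b) ↔ (G₁.Adj v₁ a ∧ π (a : V₁) = (b : V₂)))

/-! ### Treewidth and maximum degree -/

/-- A tree decomposition of `G`. -/
structure TreeDecomp {V : Type} [Fintype V] (G : SimpleGraph V) where
  n : ℕ
  T : SimpleGraph (Fin n)
  tree : T.IsTree
  bag : Fin n → Finset V
  cover_v : ∀ v : V, ∃ t, v ∈ bag t
  cover_e : ∀ u v : V, G.Adj u v → ∃ t, u ∈ bag t ∧ v ∈ bag t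
  coherent : ∀ v : V, (SimpleGraph.induce {t : Fin n | v ∈ bag t} T).Connected

/-- Width of a tree decomposition: maximum bag size minus one. -/
def TreeDecomp.width (D : TreeDecomp G) : ℕ :=
  (Finset.univ.sup fun t => (D.bag t).card) - 1

/-- Treewidth. -/
def tw {V : Type} [Fintype V] (G : SimpleGraph V) : ℕ :=
  sInf {w | ∃ D : TreeDecomp G, D.width ≤ w}

/-- Maximum degree. -/
def maxDeg {V : Type} [Fintype V] (G : SimpleGraph V) : ℕ :=
  Finset.univ.sup fun v => G.degree v

/-! ### Edge-cut width, super edge-cut width, feedback edge number -/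

/-- `T` is a maximal spanning forest of `G`. -/
def IsMSF {V : Type} (G T : SimpleGraph V) : Prop :=
  T ≤ G ∧ T.IsAcyclic ∧ ∀ u v : V, G.Adj u v → T.Reachable u v

/-- The size of the local feedback edge set at `v`: edges of `G` outside `T` whose unique
`T`-path between their endpoints contains `v`. -/
def elocCard {V : Type} [Fintype V] (G T : SimpleGraph V) (v : V) : ℕ :=
  ((Finset.univ : Finset (Sym2 V)).filter fun e =>
    e ∈ G.edgeSet ∧ e ∉ T.edgeSet ∧
      ∃ a b : V, e = s(a, b) ∧ ∃ p : T.Walk a b, p.IsPath ∧ v ∈ p.support).card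

/-- Edge-cut width of a pair `(G, T)`. -/
def ecwPair {V : Type} [Fintype V] (G T : SimpleGraph V) : ℕ :=
  1 + Finset.univ.sup fun v => elocCard G T v

/-- Edge-cut width. -/
def ecw {V : Type} [Fintype V] (G : SimpleGraph V) : ℕ :=
  sInf {k | ∃ T : SimpleGraph V, IsMSF G T ∧ ecwPair G T ≤ k}

/-- Super edge-cut width: minimum edge-cut width over all supergraphs of `G`. -/
def secw {V : Type} [Fintype V] (G : SimpleGraph V) : ℕ :=
  sInf {k | ∃ (W : Type) (fW : Fintype W) (H : SimpleGraph W) (ι : V ↪ W),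
    (∀ u v : V, G.Adj u v → H.Adj (ι u) (ι v)) ∧
    ∃ T : SimpleGraph W, IsMSF H T ∧ @ecwPair W fW H T ≤ k}

/-- Feedback edge number: minimum number of edges whose deletion makes `G` a forest. -/
def fen {V : Type} [Fintype V] (G : SimpleGraph V) : ℕ :=
  sInf {m | ∃ F : Finset (Sym2 V), ↑F ⊆ G.edgeSet ∧ F.card = m ∧
    (G.deleteEdges ↑F).IsAcyclic}

/-! ### Nice decompositions -/

/-- The children of `t` in the rooted tree of `D`. -/
def TCD.children (D : TCD G) (t : Fin D.n) : Finset (Fin D.n) :=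
  Finset.univ.filter fun s => D.T.Adj t s ∧ s ∈ D.desc t

/-- The neighborhood of a vertex set `S` in `G`. -/
def nbhd {V : Type} [Fintype V] (G : SimpleGraph V) (S : Finset V) : Finset V :=
  Finset.univ.filter fun v => v ∉ S ∧ ∃ u ∈ S, G.Adj u v

/-- A non-root node is thin if its adhesion is at most 2. -/
def TCD.IsThin (D : TCD G) (t : Fin D.n) : Prop := t ≠ D.root ∧ D.adh t ≤ 2

/-- A tree-cut decomposition is nice if for every thin node `t`, `N(Y_t)` avoids the
sets `Y_b` of all siblings `b` of `t`. -/
def TCD.IsNice (D : TCD G) : Prop :=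
  ∀ t : Fin D.n, D.IsThin t →
    ∀ p b : Fin D.n, t ∈ D.children p → b ∈ D.children p → b ≠ t →
      ∀ v ∈ nbhd G (D.Y t), v ∉ D.Y b

/-- `B_t`: the thin children `b` of `t` with `|N(Y_b)| ≤ 2` and `N(Y_b) ⊆ X_t`. -/
def TCD.B (D : TCD G) (t : Fin D.n) : Finset (Fin D.n) :=
  (D.children t).filter fun b => (nbhd G (D.Y b)).card ≤ 2 ∧ nbhd G (D.Y b) ⊆ D.bag t

/-- `B_t^{(2)}`: the members of `B_t` of adhesion exactly 2. -/
def TCD.B2 (D : TCD G) (t : Fin D.n) : Finset (Fin D.n) :=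
  (D.B t).filter fun b => D.adh b = 2

end PaperSTCW

namespace PaperSTCW

/-! ### Auxiliary lemmas for stmt3 -/

section Aux
variable {W : Type}

lemma msum_mono' {s t : Multiset ℕ} (h : s ≤ t) : s.sum ≤ t.sum := by
  obtain ⟨u, rfl⟩ := Multiset.le_iff_exists_add.mp h
  simp

lemma mdeg_mono' {E E' : Multiset (Sym2 W)} (h : E' ≤ E) (v : W) : mdeg E' v ≤ mdeg E v :=
  msum_mono' (Multiset.map_le_map h)

lemma nextE_false' (v : W) (E : Multiset (Sym2 W)) :
    nextE false v E = E.filter (fun e => v ∉ e) := by simp [nextE]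

lemma nextE_false_le' (v : W) (E : Multiset (Sym2 W)) : nextE false v E ≤ E := by
  rw [nextE_false']; exact Multiset.filter_le _ _

lemma nextE_false_mono' {E E' : Multiset (Sym2 W)} (h : E' ≤ E) (v : W) :
    nextE false v E' ≤ nextE false v E := by
  rw [nextE_false', nextE_false']; exact Multiset.filter_le_filter _ h

lemma mdeg_nextE_self' (v : W) (E : Multiset (Sym2 W)) : mdeg (nextE false v E) v = 0 := by
  rw [nextE_false', mdeg]
  refine Multiset.sum_eq_zero ?_
  intro x hx
  simp only [Multiset.mem_map, Multiset.mem_filter] at hx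
  obtain ⟨e, ⟨-, hv⟩, rfl⟩ := hx
  rw [if_neg, if_neg hv]
  rintro rfl; exact hv (by simp [Sym2.diag])

lemma nextE_comm' (u v : W) (E : Multiset (Sym2 W)) :
    nextE false u (nextE false v E) = nextE false v (nextE false u E) := by
  simp only [nextE_false', Multiset.filter_filter]
  exact Multiset.filter_congr (by intro e _; constructor <;> exact fun ⟨a,b⟩ => ⟨b,a⟩)

inductive Eras (X : Finset W) (d : ℕ) : Multiset (Sym2 W) → List W → Prop
  | nil (E) : Eras X d E []
  | cons (E v l) (hv : v ∉ X) (hd : mdeg E v ≤ d) (h : Eras X d (nextE false v E) l) :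
      Eras X d E (v :: l)

lemma eras_mono {X : Finset W} {d : ℕ} {E E' : Multiset (Sym2 W)} {l : List W}
    (hE : E' ≤ E) (h : Eras X d E l) : Eras X d E' l := by
  induction h generalizing E' with
  | nil => exact Eras.nil _
  | cons E v l hv hd h ih =>
    exact Eras.cons _ _ _ hv (le_trans (mdeg_mono' hE v) hd) (ih (nextE_false_mono' hE v))

lemma eras_step {X : Finset W} {d : ℕ} {E : Multiset (Sym2 W)} {l : List W} {u : W}
    (h : Eras X d E l) (hu : u ∉ X) (hdu : mdeg E u ≤ d) :
    Eras X d (nextE false u E) (l.filter (· ≠ u)) := by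
  induction h generalizing u with
  | nil => exact Eras.nil _
  | cons E v l hv hd h ih =>
    by_cases hvu : v = u
    · subst hvu
      simp only [List.filter_cons, decide_eq_true_eq, ne_eq, not_true_eq_false, decide_false,
        if_false]
      have h2 := ih (u := v) hv (by rw [mdeg_nextE_self']; exact Nat.zero_le _)
      have : nextE false v (nextE false v E) = nextE false v E := by
        simp only [nextE_false', Multiset.filter_filter]
        exact Multiset.filter_congr (by tauto)
      rwa [this] at h2
    · have : (v :: l).filter (· ≠ u) = v :: l.filter (· ≠ u) := by
        simp [List.filter_cons, hvu]
      rw [this]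
      refine Eras.cons _ _ _ hv (le_trans (mdeg_mono' (nextE_false_le' u E) v) hd) ?_
      have h2 := ih hu (le_trans (mdeg_mono' (nextE_false_le' v E) u) hdu)
      rwa [nextE_comm'] at h2

lemma reduce_subset (X : Finset W) (d : ℕ) (b : Bool) (S : Finset W) (E : Multiset (Sym2 W)) :
    reduce X d b S E ⊆ S := by
  rw [reduce]
  split
  · next h =>
    exact le_trans (reduce_subset X d b _ _) (Finset.erase_subset _ _)
  · exact subset_rfl
termination_by S.card
decreasing_by exact Finset.card_erase_lt_of_mem (Exists.choose_spec ‹∃ v, v ∈ S ∧ v ∉ X ∧ mdeg E v ≤ d›).1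

lemma reduce_list (X : Finset W) (d : ℕ) (S : Finset W) (E : Multiset (Sym2 W)) :
    ∃ l : List W, Eras X d E l ∧ (∀ v ∈ l, v ∈ S) ∧
      reduce X d false S E = S \ l.toFinset := by
  rw [reduce]
  split
  · next h =>
    obtain ⟨l, h1, h2, h3⟩ := reduce_list X d (S.erase h.choose) (nextE false h.choose E)
    refine ⟨h.choose :: l, Eras.cons _ _ _ h.choose_spec.2.1 h.choose_spec.2.2 h1, ?_, ?_⟩
    · intro v hv
      rcases List.mem_cons.mp hv with rfl | hv
      · exact h.choose_spec.1
      · exact Finset.mem_of_mem_erase (h2 _ hv)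
    · rw [h3]
      ext x
      simp only [List.toFinset_cons, Finset.mem_sdiff, Finset.mem_erase, Finset.mem_insert]
      tauto
  · exact ⟨[], Eras.nil _, by simp, by simp⟩
termination_by S.card
decreasing_by exact Finset.card_erase_lt_of_mem (Exists.choose_spec ‹∃ v, v ∈ S ∧ v ∉ X ∧ mdeg E v ≤ d›).1

lemma reduce_avoid (X : Finset W) (d : ℕ) (S : Finset W) (E : Multiset (Sym2 W)) (l : List W)
    (h : Eras X d E l) (hS : ∀ v ∈ l, v ∈ S) : ∀ v ∈ l, v ∉ reduce X d false S E := by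
  rw [reduce]
  split
  · next hex =>
    set u := hex.choose with hu
    intro v hv
    by_cases hvu : v = u
    · rw [hvu]
      intro hmem
      exact Finset.notMem_erase u S (reduce_subset _ _ _ _ _ hmem)
    · refine reduce_avoid X d (S.erase u) (nextE false u E) (l.filter (· ≠ u))
        (eras_step h hex.choose_spec.2.1 hex.choose_spec.2.2) ?_ v ?_
      · intro w hw
        simp only [List.mem_filter, decide_eq_true_eq] at hw
        exact Finset.mem_erase.mpr ⟨hw.2, hS _ hw.1⟩
      · simp only [List.mem_filter, decide_eq_true_eq]
        exact ⟨hv, hvu⟩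
  · next hex =>
    intro v hv
    cases l with
    | nil => cases hv
    | cons w l =>
      cases h with
      | cons _ _ _ hw hd _ =>
        exfalso
        exact hex ⟨w, hS w (by simp), hw, hd⟩
termination_by S.card
decreasing_by exact Finset.card_erase_lt_of_mem (Exists.choose_spec ‹∃ v, v ∈ S ∧ v ∉ X ∧ mdeg E v ≤ d›).1

lemma reduce_mono {X : Finset W} {d : ℕ} {S : Finset W} {E E' : Multiset (Sym2 W)}
    (h : E' ≤ E) : reduce X d false S E' ⊆ reduce X d false S E := by
  obtain ⟨l, h1, h2, h3⟩ := reduce_list X d S E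
  intro v hv
  rw [h3]
  refine Finset.mem_sdiff.mpr ⟨reduce_subset _ _ _ _ _ hv, ?_⟩
  intro hmem
  exact reduce_avoid X d S E' l (eras_mono h h1) h2 v (List.mem_toFinset.mp hmem) hv

end Aux

section Transport
variable {V : Type} [Fintype V] {G H : SimpleGraph V}

/-- Transport a tree-cut decomposition to another graph on the same vertex set. -/
def TCD.transport (D : TCD G) (H : SimpleGraph V) : TCD H :=
  ⟨D.n, D.T, D.tree, D.root, D.bag, D.partition⟩

lemma transport_slimWidth (D : TCD G) (hHG : H ≤ G) :
    (D.transport H).slimWidth ≤ D.slimWidth := by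
  refine Finset.sup_le fun t _ => ?_
  refine le_trans (max_le_max ?_ ?_) (Finset.le_sup (f := fun t => max (D.adh t) (D.tor2 t))
    (Finset.mem_univ t))
  · apply Finset.card_le_card
    intro e hel
    rw [Finset.mem_filter] at hel ⊢
    exact ⟨hel.1, SimpleGraph.edgeSet_mono hHG hel.2.1, hel.2.2⟩
  · apply Finset.card_le_card
    apply reduce_mono
    show ((((Finset.univ : Finset (Sym2 V)).filter fun e => e ∈ H.edgeSet).val.map
      (Sym2.map ((D.transport H).toTorso t))).filter fun e => ¬ e.IsDiag) ≤ _
    refine Multiset.filter_le_filter _ (Multiset.map_le_map ?_)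
    rw [Finset.val_le_iff]
    exact Finset.monotone_filter_right _ fun e _ h => SimpleGraph.edgeSet_mono hHG h

/-- The trivial one-node decomposition. -/
def trivialTCD (G : SimpleGraph V) : TCD G where
  n := 1
  T := ⊥
  tree := by
    constructor
    · rw [SimpleGraph.connected_iff]
      refine ⟨fun u v => ?_, ⟨0⟩⟩
      rw [Subsingleton.elim u v]
    · exact SimpleGraph.isAcyclic_bot
  root := 0
  bag := fun _ => Finset.univ
  partition := fun v => ⟨0, Finset.mem_univ v, fun t _ => Subsingleton.elim t 0⟩

end Transport

/-- deleting an edge does not increase slim tree-cut width. -/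


theorem stmt3 {V : Type} [Fintype V] (G : SimpleGraph V) (e : Sym2 V)
    (he : e ∈ G.edgeSet) : stcw (G.deleteEdges {e}) ≤ stcw G := by
  have hne : {k | ∃ D : TCD G, D.slimWidth ≤ k}.Nonempty :=
    ⟨(trivialTCD G).slimWidth, trivialTCD G, le_rfl⟩
  obtain ⟨D, hD⟩ := Nat.sInf_mem hne
  exact Nat.sInf_le ⟨D.transport _,
    le_trans (transport_slimWidth D (SimpleGraph.deleteEdges_le _)) hD⟩
end PaperSTCW
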